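/- Let G be an edge-colored graph of order n ≥ 4. If e(G) + c(G) ≥ n(n+1)/2 + 1, where e(G) is the number of edges and c(G) the number of distinct colors, then G contains a properly colored 4-cycle. -/
import Mathlib


open SimpleGraph Finset

/-- Number of edges of `G`. -/
noncomputable def eCount {V : Type*} (G : SimpleGraph V) : ℕ := G.edgeSet.ncard

/-- Number of distinct colors appearing on edges of `G` under coloring `χ`. -/
noncomputable def cCount {V : Type*} (G : SimpleGraph V) (χ : Sym2 V → ℕ) : ℕ := (χ '' G.edgeSet).ncard

/-- Color degree of `v`: number of distinct colors on edges incident to `v`. -/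
noncomputable def colorDeg {V : Type*} (G : SimpleGraph V) (χ : Sym2 V → ℕ) (v : V) : ℕ :=
  ((fun u => χ s(v, u)) '' G.neighborSet v).ncard

/-- `G` with coloring `χ` contains a rainbow triangle. -/
def HasRainbowTriangle {V : Type*} (G : SimpleGraph V) (χ : Sym2 V → ℕ) : Prop :=
  ∃ a b c : V, G.Adj a b ∧ G.Adj b c ∧ G.Adj a c ∧
    χ s(a, b) ≠ χ s(b, c) ∧ χ s(b, c) ≠ χ s(a, c) ∧ χ s(a, b) ≠ χ s(a, c)

/-- `G` with coloring `χ` contains a properly colored 4-cycle. -/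
def HasPCC4 {V : Type*} (G : SimpleGraph V) (χ : Sym2 V → ℕ) : Prop :=
  ∃ a b c d : V, a ≠ c ∧ b ≠ d ∧ G.Adj a b ∧ G.Adj b c ∧ G.Adj c d ∧ G.Adj d a ∧
    χ s(a, b) ≠ χ s(b, c) ∧ χ s(b, c) ≠ χ s(c, d) ∧
    χ s(c, d) ≠ χ s(d, a) ∧ χ s(d, a) ≠ χ s(a, b)


namespace PCC4aux

open scoped Classical

variable {V : Type*} (G : SimpleGraph V) (χ : Sym2 V → ℕ)

noncomputable def Es (s : Finset V) : Finset (Sym2 V) := s.sym2.filter (fun e => e ∈ G.edgeSet)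
noncomputable def Cs (s : Finset V) : Finset ℕ := (Es G s).image χ
noncomputable def Ns (s : Finset V) (v : V) : Finset V := (s.erase v).filter (fun x => G.Adj v x)
noncomputable def Ws (s : Finset V) (v : V) : Finset V := (s.erase v).filter (fun x => ¬ G.Adj v x)
noncomputable def Ds (s : Finset V) (v : V) : Finset (Sym2 V) := (Es G s).filter (fun e => v ∈ e)
noncomputable def Ps (s : Finset V) (v : V) : Finset ℕ := ((Ds G s v).image χ) \ Cs G χ (s.erase v)
noncomputable def goodF (s : Finset V) (u v : V) : Finset ℕ :=
  (Ps G χ s u).filter (fun γ => ∃ x ∈ Ns G s u ∩ Ns G s v, χ s(u, x) = γ)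

lemma mem_Es {s : Finset V} {e : Sym2 V} : e ∈ Es G s ↔ (∀ x ∈ e, x ∈ s) ∧ e ∈ G.edgeSet := by
  simp [Es, Finset.mem_filter, Finset.mem_sym2_iff]

lemma mem_Ns {s : Finset V} {v x : V} : x ∈ Ns G s v ↔ (x ≠ v ∧ x ∈ s) ∧ G.Adj v x := by
  rw [Ns, Finset.mem_filter, Finset.mem_erase]

lemma mem_Ws {s : Finset V} {v x : V} : x ∈ Ws G s v ↔ (x ≠ v ∧ x ∈ s) ∧ ¬ G.Adj v x := by
  rw [Ws, Finset.mem_filter, Finset.mem_erase]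

lemma Es_erase (s : Finset V) (v : V) :
    Es G (s.erase v) = (Es G s).filter (fun e => v ∉ e) := by
  ext e
  simp only [mem_Es, Finset.mem_filter, Finset.mem_erase]
  constructor
  · rintro ⟨h1, h2⟩
    exact ⟨⟨fun x hx => (h1 x hx).2, h2⟩, fun hv => (h1 v hv).1 rfl⟩
  · rintro ⟨⟨h1, h2⟩, hv⟩
    exact ⟨fun x hx => ⟨fun hxv => hv (hxv ▸ hx), h1 x hx⟩, h2⟩

lemma card_Es_split (s : Finset V) (v : V) :
    (Es G s).card = (Ds G s v).card + (Es G (s.erase v)).card := by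
  rw [Es_erase]
  exact (Finset.card_filter_add_card_filter_not (p := fun e => v ∈ e)).symm

lemma Cs_split (s : Finset V) (v : V) :
    Cs G χ s = Cs G χ (s.erase v) ∪ (Ds G s v).image χ := by
  have h : Es G (s.erase v) ∪ Ds G s v = Es G s := by
    ext e
    rw [Finset.mem_union, Es_erase]
    simp only [Ds, Finset.mem_filter]
    tauto
  unfold Cs
  rw [← h, Finset.image_union]

lemma card_Cs_split (s : Finset V) (v : V) :
    (Cs G χ s).card = (Ps G χ s v).card + (Cs G χ (s.erase v)).card := by
  rw [Cs_split G χ s v, Finset.union_comm, ← Finset.sdiff_union_self_eq_union, Ps]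
  rw [Finset.card_union_of_disjoint (Finset.sdiff_disjoint)]

lemma Ds_exists (s : Finset V) (v : V) {e : Sym2 V} (he : e ∈ Ds G s v) :
    ∃ x ∈ Ns G s v, s(v, x) = e := by
  rw [Ds, Finset.mem_filter, mem_Es] at he
  obtain ⟨⟨hsub, hedge⟩, hv⟩ := he
  induction e with
  | _ a b =>
    rw [Sym2.mem_iff] at hv
    rw [SimpleGraph.mem_edgeSet] at hedge
    rcases hv with rfl | rfl
    · refine ⟨b, ?_, rfl⟩
      rw [Ns, Finset.mem_filter, Finset.mem_erase]
      exact ⟨⟨(G.ne_of_adj hedge).symm, hsub b (by simp)⟩, hedge⟩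
    · refine ⟨a, ?_, Sym2.eq_swap⟩
      rw [Ns, Finset.mem_filter, Finset.mem_erase]
      exact ⟨⟨(G.ne_of_adj hedge), hsub a (by simp)⟩, hedge.symm⟩

lemma mem_Ds_of (s : Finset V) {v x : V} (hv : v ∈ s) (hx : x ∈ Ns G s v) :
    s(v, x) ∈ Ds G s v := by
  rw [Ns, Finset.mem_filter, Finset.mem_erase] at hx
  rw [Ds, Finset.mem_filter, mem_Es]
  refine ⟨⟨?_, ?_⟩, by simp⟩
  · intro y hy
    rw [Sym2.mem_iff] at hy
    rcases hy with rfl | rfl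
    · exact hv
    · exact hx.1.2
  · exact hx.2

lemma card_Ds_eq (s : Finset V) {v : V} (hv : v ∈ s) :
    (Ds G s v).card = (Ns G s v).card := by
  refine (Finset.card_bij (fun x _ => s(v, x)) ?_ ?_ ?_).symm
  · intro x hx; exact mem_Ds_of G s hv hx
  · intro x hx y hy hxy
    exact Sym2.congr_right.mp hxy
  · intro e he
    obtain ⟨x, hx, hxe⟩ := Ds_exists G s v he
    exact ⟨x, hx, hxe⟩

lemma Ps_private (s : Finset V) (v : V) {γ : ℕ} (hγ : γ ∈ Ps G χ s v) :
    (∃ x ∈ Ns G s v, χ s(v, x) = γ) ∧ ∀ e ∈ Es G s, v ∉ e → χ e ≠ γ := by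
  rw [Ps, Finset.mem_sdiff, Finset.mem_image] at hγ
  obtain ⟨⟨e, he, hce⟩, hnc⟩ := hγ
  constructor
  · obtain ⟨x, hx, hxe⟩ := Ds_exists G s v he
    exact ⟨x, hx, by rw [hxe]; exact hce⟩
  · intro e' he' hve' hc
    apply hnc
    rw [Cs, Finset.mem_image]
    refine ⟨e', ?_, hc⟩
    rw [mem_Es] at he' ⊢
    refine ⟨fun x hx => Finset.mem_erase.mpr ⟨fun h => hve' (h ▸ hx), he'.1 x hx⟩, he'.2⟩

lemma cross_pick {W : Type*} (M : W → Prop) (p q : W → ℕ) {a₁ a₂ b₁ b₂ : W}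
    (ha₁ : M a₁) (ha₂ : M a₂) (hb₁ : M b₁) (hb₂ : M b₂)
    (h1 : p a₁ ≠ p a₂) (h2 : q b₁ ≠ q b₂)
    (m1 : p a₁ ≠ q a₁) (m2 : p a₂ ≠ q a₂) (m3 : p b₁ ≠ q b₁) (m4 : p b₂ ≠ q b₂) :
    ∃ x y, M x ∧ M y ∧ p x ≠ q x ∧ q x ≠ q y ∧ q y ≠ p y ∧ p y ≠ p x := by
  by_cases hqa : q a₁ = q a₂
  · by_cases hpb : p b₁ = p b₂
    · have hj : ∃ j, (j = b₁ ∨ j = b₂) ∧ q j ≠ q a₁ := by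
        by_cases hj1 : q b₁ = q a₁
        · exact ⟨b₂, Or.inr rfl, fun h => h2 (hj1.trans h.symm)⟩
        · exact ⟨b₁, Or.inl rfl, hj1⟩
      have hi : ∃ i, (i = a₁ ∨ i = a₂) ∧ p i ≠ p b₁ := by
        by_cases hi1 : p a₁ = p b₁
        · exact ⟨a₂, Or.inr rfl, fun h => h1 (hi1.trans h.symm)⟩
        · exact ⟨a₁, Or.inl rfl, hi1⟩
      obtain ⟨j, hjmem, hjq⟩ := hj
      obtain ⟨i, himem, hip⟩ := hi
      have hMi : M i := by rcases himem with rfl | rfl <;> assumption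
      have hMj : M j := by rcases hjmem with rfl | rfl <;> assumption
      have hpi : p i ≠ q i := by rcases himem with rfl | rfl <;> assumption
      have hpj : p j ≠ q j := by rcases hjmem with rfl | rfl <;> assumption
      have hqi : q i = q a₁ := by rcases himem with rfl | rfl <;> simp [hqa.symm]
      have hpjb : p j = p b₁ := by rcases hjmem with rfl | rfl <;> simp [hpb.symm]
      exact ⟨i, j, hMi, hMj, hpi, by rw [hqi]; exact fun h => hjq h.symm,
        fun h => hpj h.symm, by rw [hpjb]; exact fun h => hip h.symm⟩
    · exact ⟨b₁, b₂, hb₁, hb₂, m3, h2, fun h => m4 h.symm, fun h => hpb h.symm⟩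
  · exact ⟨a₁, a₂, ha₁, ha₂, m1, hqa, fun h => m2 h.symm, fun h => h1 h.symm⟩

lemma mixed {s : Finset V} {u v x : V} (hvs : v ∈ s) (huv : u ≠ v)
    (hxu : x ∈ Ns G s u) (hxv : x ∈ Ns G s v) (hP : χ s(u, x) ∈ Ps G χ s u) :
    χ s(u, x) ≠ χ s(v, x) := by
  have hxu' := (mem_Ns G).mp hxu
  have hxv' := (mem_Ns G).mp hxv
  have hEs : s(v, x) ∈ Es G s := by
    rw [mem_Es]
    refine ⟨?_, hxv'.2⟩
    intro y hy
    rw [Sym2.mem_iff] at hy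
    rcases hy with rfl | rfl
    · exact hvs
    · exact hxv'.1.2
  have hu : u ∉ s(v, x) := by
    rw [Sym2.mem_iff]
    push_neg
    exact ⟨huv, fun h => hxu'.1.1 h.symm⟩
  intro h
  exact (Ps_private G χ s u hP).2 (s(v, x)) hEs hu h.symm

lemma good_count (s : Finset V) (u v : V) :
    (Ps G χ s u).card ≤ (goodF G χ s u v).card + (Ns G s u \ Ns G s v).card := by
  classical
  have hsplit := Finset.card_filter_add_card_filter_not
    (s := Ps G χ s u) (p := fun γ => ∃ x ∈ Ns G s u ∩ Ns G s v, χ s(u, x) = γ)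
  have hle : ((Ps G χ s u).filter
      (fun γ => ¬ ∃ x ∈ Ns G s u ∩ Ns G s v, χ s(u, x) = γ)).card
      ≤ (Ns G s u \ Ns G s v).card := by
    have hW : ∀ γ, ∃ x, γ ∈ (Ps G χ s u).filter
        (fun γ => ¬ ∃ x ∈ Ns G s u ∩ Ns G s v, χ s(u, x) = γ) →
        ((x ∈ Ns G s u \ Ns G s v) ∧ χ s(u, x) = γ) := by
      intro γ
      by_cases hγ : γ ∈ (Ps G χ s u).filter
        (fun γ => ¬ ∃ x ∈ Ns G s u ∩ Ns G s v, χ s(u, x) = γ)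
      · rw [Finset.mem_filter] at hγ
        obtain ⟨x, hx, hxγ⟩ := (Ps_private G χ s u hγ.1).1
        exact ⟨x, fun _ => ⟨Finset.mem_sdiff.mpr ⟨hx, fun hxv =>
          hγ.2 ⟨x, Finset.mem_inter.mpr ⟨hx, hxv⟩, hxγ⟩⟩, hxγ⟩⟩
      · exact ⟨u, fun h => absurd h hγ⟩
    choose f hf using hW
    refine Finset.card_le_card_of_injOn f (fun γ hγ => (hf γ hγ).1) ?_
    intro γ₁ h1 γ₂ h2 heq
    rw [Finset.mem_coe] at h1 h2
    rw [← (hf γ₁ h1).2, ← (hf γ₂ h2).2, heq]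
  have hgf : (goodF G χ s u v).card + ((Ps G χ s u).filter
      (fun γ => ¬ ∃ x ∈ Ns G s u ∩ Ns G s v, χ s(u, x) = γ)).card = (Ps G χ s u).card := hsplit
  omega

lemma lemB {s : Finset V} {u v : V} (hus : u ∈ s) (hvs : v ∈ s) (huv : u ≠ v)
    (hu2 : 2 ≤ (goodF G χ s u v).card) (hv2 : 2 ≤ (goodF G χ s v u).card) :
    HasPCC4 G χ := by
  obtain ⟨γ₁, hγ₁, γ₂, hγ₂, hγne⟩ :=
    Finset.one_lt_card.mp (show 1 < (goodF G χ s u v).card by omega)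
  obtain ⟨δ₁, hδ₁, δ₂, hδ₂, hδne⟩ :=
    Finset.one_lt_card.mp (show 1 < (goodF G χ s v u).card by omega)
  simp only [goodF, Finset.mem_filter] at hγ₁ hγ₂ hδ₁ hδ₂
  obtain ⟨a₁, ha₁, ha₁γ⟩ := hγ₁.2
  obtain ⟨a₂, ha₂, ha₂γ⟩ := hγ₂.2
  obtain ⟨b₁, hb₁, hb₁δ⟩ := hδ₁.2
  obtain ⟨b₂, hb₂, hb₂δ⟩ := hδ₂.2
  rw [Finset.mem_inter] at ha₁ ha₂ hb₁ hb₂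
  set p : V → ℕ := fun x => χ s(u, x) with hp
  set q : V → ℕ := fun x => χ s(v, x) with hq
  have key : ∃ x y, (x ∈ Ns G s u ∧ x ∈ Ns G s v) ∧ (y ∈ Ns G s u ∧ y ∈ Ns G s v) ∧
      p x ≠ q x ∧ q x ≠ q y ∧ q y ≠ p y ∧ p y ≠ p x := by
    have m1 : p a₁ ≠ q a₁ := mixed G χ hvs huv ha₁.1 ha₁.2 (ha₁γ ▸ hγ₁.1)
    have m2 : p a₂ ≠ q a₂ := mixed G χ hvs huv ha₂.1 ha₂.2 (ha₂γ ▸ hγ₂.1)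
    have m3 : p b₁ ≠ q b₁ := fun h =>
      (mixed G χ hus huv.symm hb₁.1 hb₁.2 (hb₁δ ▸ hδ₁.1)) h.symm
    have m4 : p b₂ ≠ q b₂ := fun h =>
      (mixed G χ hus huv.symm hb₂.1 hb₂.2 (hb₂δ ▸ hδ₂.1)) h.symm
    have h1 : p a₁ ≠ p a₂ := by
      rw [hp]; simp only []; rw [ha₁γ, ha₂γ]; exact hγne
    have h2 : q b₁ ≠ q b₂ := by
      rw [hq]; simp only []; rw [hb₁δ, hb₂δ]; exact hδne
    obtain ⟨x, y, hx, hy, c1, c2, c3, c4⟩ := cross_pick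
      (fun x => x ∈ Ns G s u ∧ x ∈ Ns G s v) p q
      ⟨ha₁.1, ha₁.2⟩ ⟨ha₂.1, ha₂.2⟩ ⟨hb₁.2, hb₁.1⟩ ⟨hb₂.2, hb₂.1⟩ h1 h2 m1 m2 m3 m4
    exact ⟨x, y, hx, hy, c1, c2, c3, c4⟩
  obtain ⟨x, y, hx, hy, c1, c2, c3, c4⟩ := key
  have exv : χ s(x, v) = q x := by rw [hq]; simp only []; rw [Sym2.eq_swap]
  have eyu : χ s(y, u) = p y := by rw [hp]; simp only []; rw [Sym2.eq_swap]
  refine ⟨u, x, v, y, huv, fun h => c4 (h ▸ rfl), ((mem_Ns G).mp hx.1).2,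
    (((mem_Ns G).mp hx.2).2).symm, ((mem_Ns G).mp hy.2).2, (((mem_Ns G).mp hy.1).2).symm,
    ?_, ?_, ?_, ?_⟩
  · rw [exv]; exact c1
  · rw [exv]; exact c2
  · rw [eyu]; exact c3
  · rw [eyu]; exact c4

lemma Ns_Ws_card {s : Finset V} {v : V} (hv : v ∈ s) :
    (Ns G s v).card + (Ws G s v).card + 1 = s.card := by
  have h := Finset.card_filter_add_card_filter_not
    (s := s.erase v) (p := fun x => G.Adj v x)
  have h2 : (s.erase v).card + 1 = s.card := Finset.card_erase_add_one hv
  rw [Ns, Ws]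
  omega

lemma sdiff_bound_nonadj {s : Finset V} {u v : V} (hus : u ∈ s) (huv : u ≠ v)
    (hnadj : ¬ G.Adj u v) :
    (Ns G s u \ Ns G s v).card + 1 ≤ (Ws G s v \ Ws G s u).card := by
  have hsub : Ns G s u \ Ns G s v ⊆ (Ws G s v \ Ws G s u).erase u := by
    intro x hx
    rw [Finset.mem_sdiff, mem_Ns, mem_Ns] at hx
    obtain ⟨⟨⟨hxu, hxs⟩, hadj⟩, hnv⟩ := hx
    have hxv : x ≠ v := fun h => hnadj (h ▸ hadj)
    rw [Finset.mem_erase, Finset.mem_sdiff, mem_Ws, mem_Ws]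
    refine ⟨hxu, ⟨⟨hxv, hxs⟩, fun hadjv => hnv ⟨⟨hxv, hxs⟩, hadjv⟩⟩, ?_⟩
    rintro ⟨-, hna⟩
    exact hna hadj
  have humem : u ∈ Ws G s v \ Ws G s u := by
    rw [Finset.mem_sdiff, mem_Ws]
    refine ⟨⟨⟨huv, hus⟩, fun h => hnadj h.symm⟩, ?_⟩
    rw [mem_Ws]
    rintro ⟨⟨h, -⟩, -⟩
    exact h rfl
  have h1 := Finset.card_le_card hsub
  rw [Finset.card_erase_of_mem humem] at h1
  have h2 : 1 ≤ (Ws G s v \ Ws G s u).card := Finset.card_pos.mpr ⟨u, humem⟩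
  omega

lemma sdiff_bound_gen (s : Finset V) (u v : V) :
    (Ns G s u \ Ns G s v).card ≤ 1 + (Ws G s v \ Ws G s u).card := by
  have hsub : Ns G s u \ Ns G s v ⊆ insert v (Ws G s v \ Ws G s u) := by
    intro x hx
    rw [Finset.mem_sdiff, mem_Ns, mem_Ns] at hx
    obtain ⟨⟨⟨hxu, hxs⟩, hadjx⟩, hnv⟩ := hx
    rw [Finset.mem_insert]
    by_cases hxv : x = v
    · exact Or.inl hxv
    · refine Or.inr ?_
      rw [Finset.mem_sdiff, mem_Ws, mem_Ws]
      refine ⟨⟨⟨hxv, hxs⟩, fun hadjv => hnv ⟨⟨hxv, hxs⟩, hadjv⟩⟩, ?_⟩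
      rintro ⟨-, hna⟩
      exact hna hadjx
  calc (Ns G s u \ Ns G s v).card ≤ (insert v (Ws G s v \ Ws G s u)).card :=
        Finset.card_le_card hsub
    _ ≤ 1 + (Ws G s v \ Ws G s u).card := by
        rw [add_comm]; exact Finset.card_insert_le _ _

lemma pair_ineq_nonadj {s : Finset V} {u v : V} (hus : u ∈ s) (hvs : v ∈ s) (huv : u ≠ v)
    (hnadj : ¬ G.Adj u v)
    (hPu : (Ws G s u).card + 2 ≤ (Ps G χ s u).card)
    (hPv : (Ws G s v).card + 2 ≤ (Ps G χ s v).card)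
    (hno : ¬ HasPCC4 G χ) :
    (Ws G s u).card + 2 + (Ws G s u ∩ Ws G s v).card ≤ (Ws G s v).card ∨
    (Ws G s v).card + 2 + (Ws G s u ∩ Ws G s v).card ≤ (Ws G s u).card := by
  have hdisj : (goodF G χ s u v).card ≤ 1 ∨ (goodF G χ s v u).card ≤ 1 := by
    by_contra h
    push_neg at h
    exact hno (lemB G χ hus hvs huv (by omega) (by omega))
  have hgc1 := good_count G χ s u v
  have hgc2 := good_count G χ s v u
  have b1 := sdiff_bound_nonadj G hus huv hnadj
  have b2 := sdiff_bound_nonadj G hvs huv.symm (fun h => hnadj h.symm)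
  have hsd1 := Finset.card_sdiff_add_card_inter (Ws G s v) (Ws G s u)
  have hsd2 := Finset.card_sdiff_add_card_inter (Ws G s u) (Ws G s v)
  have hcomm : (Ws G s v ∩ Ws G s u).card = (Ws G s u ∩ Ws G s v).card := by
    rw [Finset.inter_comm]
  rcases hdisj with h | h
  · left; omega
  · right; omega

lemma pair_ineq_adj {s : Finset V} {u v : V} (hus : u ∈ s) (hvs : v ∈ s) (huv : u ≠ v)
    (hPu : (Ws G s u).card + 2 ≤ (Ps G χ s u).card)
    (hPv : (Ws G s v).card + 2 ≤ (Ps G χ s v).card)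
    (hno : ¬ HasPCC4 G χ) :
    (Ws G s u).card + (Ws G s u ∩ Ws G s v).card ≤ (Ws G s v).card ∨
    (Ws G s v).card + (Ws G s u ∩ Ws G s v).card ≤ (Ws G s u).card := by
  have hdisj : (goodF G χ s u v).card ≤ 1 ∨ (goodF G χ s v u).card ≤ 1 := by
    by_contra h
    push_neg at h
    exact hno (lemB G χ hus hvs huv (by omega) (by omega))
  have hgc1 := good_count G χ s u v
  have hgc2 := good_count G χ s v u
  have b1 := sdiff_bound_gen G s u v
  have b2 := sdiff_bound_gen G s v u
  have hsd1 := Finset.card_sdiff_add_card_inter (Ws G s v) (Ws G s u)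
  have hsd2 := Finset.card_sdiff_add_card_inter (Ws G s u) (Ws G s v)
  have hcomm : (Ws G s v ∩ Ws G s u).card = (Ws G s u ∩ Ws G s v).card := by
    rw [Finset.inter_comm]
  rcases hdisj with h | h
  · left; omega
  · right; omega

lemma complete_unique_aux {s : Finset V} {u v : V}
    (hcomp : ∀ x ∈ s, ∀ y ∈ s, x ≠ y → G.Adj x y)
    (hus : u ∈ s) (hvs : v ∈ s) (huv : u ≠ v)
    (hPu : (Ws G s u).card + 2 ≤ (Ps G χ s u).card)
    (hgood : (goodF G χ s u v).card ≤ 1) :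
    ∀ e ∈ Es G s, e ≠ s(u, v) → χ e ≠ χ s(u, v) := by
  have hWu : Ws G s u = ∅ := by
    rw [Finset.eq_empty_iff_forall_notMem]
    intro x hx
    rw [mem_Ws] at hx
    exact hx.2 (hcomp u hus x hx.1.2 (Ne.symm hx.1.1))
  have hPu2 : 2 ≤ (Ps G χ s u).card := by
    rw [hWu] at hPu
    simpa using hPu
  have hsplit := Finset.card_filter_add_card_filter_not
    (s := Ps G χ s u) (p := fun γ => ∃ x ∈ Ns G s u ∩ Ns G s v, χ s(u, x) = γ)
  have hgf : (goodF G χ s u v).card + ((Ps G χ s u).filter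
      (fun γ => ¬ ∃ x ∈ Ns G s u ∩ Ns G s v, χ s(u, x) = γ)).card = (Ps G χ s u).card := hsplit
  have hbad : 1 ≤ ((Ps G χ s u).filter
      (fun γ => ¬ ∃ x ∈ Ns G s u ∩ Ns G s v, χ s(u, x) = γ)).card := by omega
  obtain ⟨γ, hγ⟩ := Finset.card_pos.mp (show 0 < ((Ps G χ s u).filter
      (fun γ => ¬ ∃ x ∈ Ns G s u ∩ Ns G s v, χ s(u, x) = γ)).card by omega)
  rw [Finset.mem_filter] at hγ
  obtain ⟨hγP, hγbad⟩ := hγ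
  obtain ⟨x₀, hx₀, hx₀γ⟩ := (Ps_private G χ s u hγP).1
  have hx₀' := (mem_Ns G).mp hx₀
  have hx₀v : x₀ = v := by
    by_contra hne
    apply hγbad
    refine ⟨x₀, Finset.mem_inter.mpr ⟨hx₀, ?_⟩, hx₀γ⟩
    rw [mem_Ns]
    exact ⟨⟨hne, hx₀'.1.2⟩, hcomp v hvs x₀ hx₀'.1.2 (fun h => hne h.symm)⟩
  have hγuv : χ s(u, v) = γ := by rw [← hx₀v]; exact hx₀γ
  intro e he hene hcontra
  have hceγ : χ e = γ := hcontra.trans hγuv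
  by_cases hue : u ∈ e
  · have heD : e ∈ Ds G s u := by
      rw [Ds, Finset.mem_filter]
      exact ⟨he, hue⟩
    obtain ⟨y, hy, hye⟩ := Ds_exists G s u heD
    have hy' := (mem_Ns G).mp hy
    have hyv : y ≠ v := fun h => hene (by rw [← hye, h])
    apply hγbad
    refine ⟨y, Finset.mem_inter.mpr ⟨hy, ?_⟩, by rw [hye]; exact hceγ⟩
    rw [mem_Ns]
    exact ⟨⟨hyv, hy'.1.2⟩, hcomp v hvs y hy'.1.2 (fun h => hyv h.symm)⟩
  · exact (Ps_private G χ s u hγP).2 e he hue hceγ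

lemma complete_unique {s : Finset V} {u v : V}
    (hcomp : ∀ x ∈ s, ∀ y ∈ s, x ≠ y → G.Adj x y)
    (hus : u ∈ s) (hvs : v ∈ s) (huv : u ≠ v)
    (hPu : (Ws G s u).card + 2 ≤ (Ps G χ s u).card)
    (hPv : (Ws G s v).card + 2 ≤ (Ps G χ s v).card)
    (hno : ¬ HasPCC4 G χ) :
    ∀ e ∈ Es G s, e ≠ s(u, v) → χ e ≠ χ s(u, v) := by
  have hdisj : (goodF G χ s u v).card ≤ 1 ∨ (goodF G χ s v u).card ≤ 1 := by
    by_contra h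
    push_neg at h
    exact hno (lemB G χ hus hvs huv (by omega) (by omega))
  rcases hdisj with h | h
  · exact complete_unique_aux G χ hcomp hus hvs huv hPu h
  · intro e he hene
    have h2 : e ≠ s(v, u) := by rw [Sym2.eq_swap]; exact hene
    have h3 := complete_unique_aux G χ hcomp hvs hus (Ne.symm huv) hPv h e he h2
    rw [Sym2.eq_swap] at h3
    exact h3

lemma sym2_ne_of_ne {a b c : V} (hac : a ≠ c) : s(b, c) ≠ s(a, b) := by
  intro h
  rw [Sym2.eq_iff] at h
  rcases h with ⟨h1, h2⟩ | ⟨-, h2⟩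
  · exact hac (h2.trans h1).symm
  · exact hac h2.symm

lemma irred_false {s : Finset V} (hcard : 4 ≤ s.card)
    (hirr : ∀ v ∈ s, (Ws G s v).card + 2 ≤ (Ps G χ s v).card)
    (hno : ¬ HasPCC4 G χ) : False := by
  by_cases hcomp : ∀ x ∈ s, ∀ y ∈ s, x ≠ y → G.Adj x y
  · -- complete case: all edges uniquely colored, so take any rainbow C4
    obtain ⟨a, ha⟩ := Finset.card_pos.mp (show 0 < s.card by omega)
    have h1 : 0 < (s.erase a).card := by
      rw [Finset.card_erase_of_mem ha]; omega
    obtain ⟨b, hb⟩ := Finset.card_pos.mp h1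
    have h2 : 0 < ((s.erase a).erase b).card := by
      rw [Finset.card_erase_of_mem hb, Finset.card_erase_of_mem ha]; omega
    obtain ⟨c, hc⟩ := Finset.card_pos.mp h2
    have h3 : 0 < (((s.erase a).erase b).erase c).card := by
      rw [Finset.card_erase_of_mem hc, Finset.card_erase_of_mem hb,
        Finset.card_erase_of_mem ha]; omega
    obtain ⟨d, hd⟩ := Finset.card_pos.mp h3
    have hcs : c ∈ s := Finset.mem_of_mem_erase (Finset.mem_of_mem_erase hc)
    have hbs : b ∈ s := Finset.mem_of_mem_erase hb
    have hds : d ∈ s := Finset.mem_of_mem_erase (Finset.mem_of_mem_erase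
      (Finset.mem_of_mem_erase hd))
    have hba : b ≠ a := Finset.ne_of_mem_erase hb
    have hcb : c ≠ b := Finset.ne_of_mem_erase hc
    have hca : c ≠ a := Finset.ne_of_mem_erase (Finset.mem_of_mem_erase hc)
    have hdc : d ≠ c := Finset.ne_of_mem_erase hd
    have hdb : d ≠ b := Finset.ne_of_mem_erase (Finset.mem_of_mem_erase hd)
    have hda : d ≠ a := Finset.ne_of_mem_erase (Finset.mem_of_mem_erase
      (Finset.mem_of_mem_erase hd))
    have hedge : ∀ x ∈ s, ∀ y ∈ s, x ≠ y → s(x, y) ∈ Es G s := by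
      intro x hx y hy hxy
      rw [mem_Es]
      constructor
      · intro z hz
        rw [Sym2.mem_iff] at hz
        rcases hz with rfl | rfl
        · exact hx
        · exact hy
      · exact hcomp x hx y hy hxy
    have huniq : ∀ u ∈ s, ∀ v ∈ s, u ≠ v → ∀ e ∈ Es G s, e ≠ s(u, v) → χ e ≠ χ s(u, v) := by
      intro u hu v hv huv
      exact complete_unique G χ hcomp hu hv huv (hirr u hu) (hirr v hv) hno
    apply hno
    refine ⟨a, b, c, d, Ne.symm hca, Ne.symm hdb,
      hcomp a ha b hbs (Ne.symm hba), hcomp b hbs c hcs (Ne.symm hcb),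
      hcomp c hcs d hds (Ne.symm hdc), hcomp d hds a ha hda, ?_, ?_, ?_, ?_⟩
    · exact Ne.symm (huniq a ha b hbs (Ne.symm hba) (s(b, c)) (hedge b hbs c hcs (Ne.symm hcb))
        (sym2_ne_of_ne (Ne.symm hca)))
    · exact Ne.symm (huniq b hbs c hcs (Ne.symm hcb) (s(c, d)) (hedge c hcs d hds (Ne.symm hdc))
        (sym2_ne_of_ne (Ne.symm hdb)))
    · exact Ne.symm (huniq c hcs d hds (Ne.symm hdc) (s(d, a)) (hedge d hds a ha hda)
        (sym2_ne_of_ne hca))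
    · exact Ne.symm (huniq d hds a ha hda (s(a, b)) (hedge a ha b hbs (Ne.symm hba))
        (sym2_ne_of_ne hdb))
  · push_neg at hcomp
    obtain ⟨u₀, hu₀, v₀, hv₀, hne₀, hnadj₀⟩ := hcomp
    obtain ⟨u, hus, hmax⟩ := Finset.exists_max_image s (fun v => (Ws G s v).card) ⟨u₀, hu₀⟩
    have hmem₀ : v₀ ∈ Ws G s u₀ := by
      rw [mem_Ws]
      exact ⟨⟨fun h => hne₀ h.symm, hv₀⟩, hnadj₀⟩
    have hT1 : 1 ≤ (Ws G s u).card :=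
      le_trans (Finset.card_pos.mpr ⟨v₀, hmem₀⟩) (hmax u₀ hu₀)
    have hmaps : ∀ w ∈ Ws G s u, (Ws G s w).card ∈ Finset.Icc 1 ((Ws G s u).card - 2) := by
      intro w hw
      have hw' := (mem_Ws G).mp hw
      have hws : w ∈ s := hw'.1.2
      have hwu : w ≠ u := hw'.1.1
      have hnadj : ¬ G.Adj u w := hw'.2
      have humem : u ∈ Ws G s w := by
        rw [mem_Ws]
        exact ⟨⟨Ne.symm hwu, hus⟩, fun h => hnadj h.symm⟩
      have h1 : 1 ≤ (Ws G s w).card := Finset.card_pos.mpr ⟨u, humem⟩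
      have hp := pair_ineq_nonadj G χ hus hws (Ne.symm hwu) hnadj
        (hirr u hus) (hirr w hws) hno
      have hwT := hmax w hws
      rw [Finset.mem_Icc]
      rcases hp with h | h
      · omega
      · omega
    have hinj : Set.InjOn (fun w => (Ws G s w).card) ↑(Ws G s u) := by
      intro w₁ hw₁ w₂ hw₂ heq
      rw [Finset.mem_coe] at hw₁ hw₂
      by_contra hne
      have hw₁' := (mem_Ws G).mp hw₁
      have hw₂' := (mem_Ws G).mp hw₂
      have hu1 : u ∈ Ws G s w₁ := by
        rw [mem_Ws]
        exact ⟨⟨Ne.symm hw₁'.1.1, hus⟩, fun h => hw₁'.2 h.symm⟩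
      have hu2 : u ∈ Ws G s w₂ := by
        rw [mem_Ws]
        exact ⟨⟨Ne.symm hw₂'.1.1, hus⟩, fun h => hw₂'.2 h.symm⟩
      have hcod : 1 ≤ (Ws G s w₁ ∩ Ws G s w₂).card :=
        Finset.card_pos.mpr ⟨u, Finset.mem_inter.mpr ⟨hu1, hu2⟩⟩
      simp only at heq
      by_cases hadj : G.Adj w₁ w₂
      · rcases pair_ineq_adj G χ hw₁'.1.2 hw₂'.1.2 hne (hirr w₁ hw₁'.1.2)
          (hirr w₂ hw₂'.1.2) hno with h | h <;> omega
      · rcases pair_ineq_nonadj G χ hw₁'.1.2 hw₂'.1.2 hne hadj (hirr w₁ hw₁'.1.2)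
          (hirr w₂ hw₂'.1.2) hno with h | h <;> omega
    have hcardle := Finset.card_le_card_of_injOn _ hmaps hinj
    rw [Nat.card_Icc] at hcardle
    omega

lemma Es_card_le (s : Finset V) : (Es G s).card + s.card ≤ (s.card + 1).choose 2 := by
  have hsub : Es G s ⊆ s.sym2.filter (fun e => ¬ e.IsDiag) := by
    intro e he
    rw [mem_Es] at he
    rw [Finset.mem_filter, Finset.mem_sym2_iff]
    refine ⟨he.1, ?_⟩
    intro hdiag
    induction e with
    | _ a b =>
      rw [Sym2.mk_isDiag_iff] at hdiag
      rw [SimpleGraph.mem_edgeSet] at he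
      exact G.ne_of_adj he.2 hdiag
  have hdiag : (s.sym2.filter (fun e => e.IsDiag)).card = s.card := by
    refine (Finset.card_bij (fun a _ => s(a, a)) ?_ ?_ ?_).symm
    · intro a ha
      rw [Finset.mem_filter]
      exact ⟨Finset.mk_mem_sym2_iff.mpr ⟨ha, ha⟩, Sym2.mk_isDiag_iff.mpr rfl⟩
    · intro a ha b hb hab
      rw [Sym2.eq_iff] at hab
      rcases hab with ⟨h, -⟩ | ⟨h, -⟩ <;> exact h
    · intro e he
      rw [Finset.mem_filter] at he
      induction e with
      | _ a b =>
        have hab : a = b := Sym2.mk_isDiag_iff.mp he.2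
        subst hab
        exact ⟨a, Finset.mem_sym2_iff.mp he.1 a (by simp), rfl⟩
  have hsplit := Finset.card_filter_add_card_filter_not
    (s := s.sym2) (p := fun e => e.IsDiag)
  have hsym2 := Finset.card_sym2 s
  have hle := Finset.card_le_card hsub
  omega

lemma main_bound (s : Finset V) (hno : ¬ HasPCC4 G χ) :
    (Es G s).card + (Cs G χ s).card ≤ (s.card + 1).choose 2 := by
  induction s using Finset.strongInductionOn with
  | _ s IH =>
  by_cases hsmall : s.card ≤ 3
  · have he := Es_card_le G s
    have hc : (Cs G χ s).card ≤ (Es G s).card := Finset.card_image_le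
    have hch : (s.card + 1).choose 2 ≤ 2 * s.card := by
      have h0 : s.card ≤ 3 := hsmall
      interval_cases h : s.card <;> decide
    omega
  · push_neg at hsmall
    have hcard4 : 4 ≤ s.card := hsmall
    by_cases hred : ∃ v ∈ s, (Ds G s v).card + (Ps G χ s v).card ≤ s.card
    · obtain ⟨v, hvs, hv⟩ := hred
      have hIH := IH (s.erase v) (Finset.erase_ssubset hvs)
      have hE := card_Es_split G s v
      have hC := card_Cs_split G χ s v
      have hm : (s.erase v).card + 1 = s.card := Finset.card_erase_add_one hvs
      have hch := Nat.choose_succ_succ ((s.erase v).card + 1) 1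
      simp only [Nat.succ_eq_add_one, Nat.choose_one_right] at hch
      norm_num at hch
      rw [hm] at hch hIH
      omega
    · push_neg at hred
      exfalso
      refine irred_false G χ hcard4 ?_ hno
      intro v hvs
      have h1 := hred v hvs
      have h2 := card_Ds_eq G s (v := v) hvs
      have h3 := Ns_Ws_card G (v := v) hvs
      omega

end PCC4aux

/-- If `e(G) + c(G) ≥ n(n+1)/2 + 1` for an edge-colored graph of order `n ≥ 4`,
then `G` contains a properly colored `C₄`. -/
theorem stmt_3 {V : Type*} [Fintype V] (hn : 4 ≤ Fintype.card V)
    (G : SimpleGraph V) (χ : Sym2 V → ℕ)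
    (h : Fintype.card V * (Fintype.card V + 1) / 2 + 1 ≤ eCount G + cCount G χ) :
    HasPCC4 G χ := by
  classical
  by_contra hno
  have hb := PCC4aux.main_bound G χ Finset.univ hno
  have h1 : G.edgeSet = ↑(PCC4aux.Es G (Finset.univ : Finset V)) := by
    ext e
    simp [PCC4aux.mem_Es]
  have he : eCount G = (PCC4aux.Es G (Finset.univ : Finset V)).card := by
    rw [eCount, h1, Set.ncard_coe_finset]
  have hc : cCount G χ = (PCC4aux.Cs G χ (Finset.univ : Finset V)).card := by
    rw [cCount, h1]
    rw [show (χ '' ↑(PCC4aux.Es G (Finset.univ : Finset V)) : Set ℕ)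
        = ↑((PCC4aux.Es G (Finset.univ : Finset V)).image χ) from (Finset.coe_image).symm]
    rw [Set.ncard_coe_finset]
    rfl
  have hcard : (Finset.univ : Finset V).card = Fintype.card V := Finset.card_univ
  have hch : (Fintype.card V + 1).choose 2 = Fintype.card V * (Fintype.card V + 1) / 2 := by
    rw [Nat.choose_two_right]
    simp [Nat.mul_comm]
  rw [he, hc] at h
  rw [hcard, hch] at hb
  omega
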